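/- For every p > 1 and every L > 0, the one-dimensional solution u_{p,L} is nondegenerate: if z is a C² function on [0,L] satisfying the linearized equation -z'' = p·u_{p,L}^{p-1}·z on (0,L) together with z'(0) = 0 and z(L) = 0, then z is identically zero on [0,L]. -/

import Mathlib

open Real Set Filter Topology

noncomputable section

/-- `u` is the (unique) positive solution of the one-dimensional Lane–Emden problem
`-u'' = u^p` on `(0,L)` with `u > 0` on `[0,L)`, `u'(0) = 0` and `u(L) = 0`. -/
def IsLaneEmdenL (p L : ℝ) (u : ℝ → ℝ) : Prop :=
  ContDiff ℝ 2 u ∧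
  (∀ t ∈ Ioo (0 : ℝ) L, deriv (deriv u) t = -(u t ^ p)) ∧
  (∀ t ∈ Ico (0 : ℝ) L, 0 < u t) ∧
  deriv u 0 = 0 ∧ u L = 0

/-- A real function on `[a,b]` which is continuous on `[a,b]` and has zero derivative
on `(a,b)` takes the same value at the endpoints. -/
lemma laneEmden_aux_const_of_hasDerivAt_zero {F : ℝ → ℝ} {a b : ℝ} (hab : a ≤ b)
    (hc : ContinuousOn F (Icc a b))
    (hd : ∀ t ∈ Ioo a b, HasDerivAt F 0 t) : F b = F a := by
  have hdiff : DifferentiableOn ℝ F (interior (Icc a b)) := by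
    rw [interior_Icc]
    exact fun x hx => (hd x hx).differentiableAt.differentiableWithinAt
  have h0 : ∀ x ∈ interior (Icc a b), deriv F x = 0 := by
    rw [interior_Icc]
    exact fun x hx => (hd x hx).deriv
  have hm := monotoneOn_of_deriv_nonneg (convex_Icc a b) hc hdiff (fun x hx => (h0 x hx).ge)
  have han := antitoneOn_of_deriv_nonpos (convex_Icc a b) hc hdiff (fun x hx => (h0 x hx).le)
  exact le_antisymm (han (left_mem_Icc.2 hab) (right_mem_Icc.2 hab) hab)
    (hm (left_mem_Icc.2 hab) (right_mem_Icc.2 hab) hab)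

/-- Nondegeneracy of the one-dimensional solution `u_{p,L}`: any solution `z` of the
linearized problem `-z'' = p u^(p-1) z` on `(0,L)` with `z'(0) = 0`, `z(L) = 0`
vanishes identically on `[0,L]`. -/
theorem nondegeneracy_of_one_dim_solution
    (p L : ℝ) (hp : 1 < p) (hL : 0 < L)
    (u : ℝ → ℝ) (hu : IsLaneEmdenL p L u)
    (z : ℝ → ℝ) (hz : ContDiff ℝ 2 z)
    (hzeq : ∀ t ∈ Ioo (0 : ℝ) L, -(deriv (deriv z) t) = p * u t ^ (p - 1) * z t)
    (hz0 : deriv z 0 = 0) (hzL : z L = 0) :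
    ∀ t ∈ Icc (0 : ℝ) L, z t = 0 := by
  obtain ⟨hu2, hueq, hupos, hu'0, huL⟩ := hu
  have two_eq : (2 : WithTop ℕ∞) = 1 + 1 := by norm_num
  -- basic regularity facts
  have hu1 : ContDiff ℝ 1 (deriv u) := by
    rw [two_eq, contDiff_succ_iff_deriv] at hu2
    exact hu2.2.2
  have hz1 : ContDiff ℝ 1 (deriv z) := by
    rw [two_eq, contDiff_succ_iff_deriv] at hz
    exact hz.2.2
  have hud : Differentiable ℝ u := by
    rw [two_eq, contDiff_succ_iff_deriv] at hu2
    exact hu2.1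
  have hzd : Differentiable ℝ z := by
    rw [two_eq, contDiff_succ_iff_deriv] at hz
    exact hz.1
  have huc : Continuous u := hud.continuous
  have hzc : Continuous z := hzd.continuous
  have hu'd : Differentiable ℝ (deriv u) := hu1.differentiable one_ne_zero
  have hz'd : Differentiable ℝ (deriv z) := hz1.differentiable one_ne_zero
  have hu'c : Continuous (deriv u) := hu'd.continuous
  have hz'c : Continuous (deriv z) := hz'd.continuous
  have hu''c : Continuous (deriv (deriv u)) := hu1.continuous_deriv le_rfl
  have hz''c : Continuous (deriv (deriv z)) := hz1.continuous_deriv le_rfl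
  have hp1 : (0:ℝ) < p - 1 := by linarith
  have hu0 : 0 < u 0 := hupos 0 ⟨le_rfl, hL⟩
  -- continuity of the powers
  have hup_cont : Continuous (fun s => u s ^ p) :=
    huc.rpow_const (fun x => Or.inr (by linarith))
  have hup1_cont : Continuous (fun s => u s ^ (p - 1)) :=
    huc.rpow_const (fun x => Or.inr (by linarith))
  have hup2_cont : Continuous (fun s => u s ^ (p + 1)) :=
    huc.rpow_const (fun x => Or.inr (by linarith))
  -- extension of the linearized equation to the closed interval
  have hzext : ∀ s ∈ Icc (0:ℝ) L, deriv (deriv z) s = -(p * u s ^ (p - 1) * z s) := by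
    have heq : EqOn (deriv (deriv z)) (fun s => -(p * u s ^ (p - 1) * z s)) (Ioo 0 L) := by
      intro t ht
      have := hzeq t ht
      simp only
      linarith
    have hcl := heq.closure hz''c (((continuous_const.mul hup1_cont).mul hzc).neg)
    rw [closure_Ioo hL.ne] at hcl
    exact fun s hs => hcl hs
  -- Energy identity:  u'(L)^2/2 = u(0)^(p+1)/(p+1),  hence  u'(L) ≠ 0
  have hu'L : deriv u L ≠ 0 := by
    set E : ℝ → ℝ := fun t => (deriv u t) ^ 2 / 2 + u t ^ (p + 1) / (p + 1) with hE
    have hEL : E L = E 0 := by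
      apply laneEmden_aux_const_of_hasDerivAt_zero hL.le
      · exact (((hu'c.pow 2).div_const 2).add (hup2_cont.div_const (p+1))).continuousOn
      · intro t ht
        have h1 : HasDerivAt (fun s => deriv u s ^ 2)
            (2 * deriv u t ^ 1 * deriv (deriv u) t) t := by
          simpa using ((hu'd t).hasDerivAt.fun_pow 2)
        have h2 : HasDerivAt (fun s => u s ^ (p + 1))
            (deriv u t * (p + 1) * u t ^ (p + 1 - 1)) t :=
          (hud t).hasDerivAt.rpow_const (Or.inr (by linarith))
        have H := (h1.div_const 2).fun_add (h2.div_const (p + 1))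
        refine HasDerivAt.congr_deriv H (Eq.symm ?_)
        rw [show p + 1 - 1 = p by ring, hueq t ht]
        field_simp
        ring
    have hEL' : (deriv u L) ^ 2 / 2 = u 0 ^ (p + 1) / (p + 1) := by
      have h0 : (0:ℝ) ^ (p + 1) = 0 := Real.zero_rpow (by linarith)
      simpa [hE, huL, h0, hu'0] using hEL
    intro h
    have hpos : 0 < u 0 ^ (p + 1) / (p + 1) :=
      div_pos (Real.rpow_pos_of_pos hu0 _) (by linarith)
    rw [h] at hEL'
    norm_num at hEL'
    linarith
  -- The auxiliary function F built from the scaling solution; F is constant, F(0)=0,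
  -- F(L) = L z'(L) u'(L), hence z'(L) = 0.
  have hz'L : deriv z L = 0 := by
    set c : ℝ := 2 / (p - 1) with hc
    set F : ℝ → ℝ := fun t =>
      t * (deriv z t * deriv u t + z t * u t ^ p) +
        c * (deriv z t * u t - z t * deriv u t) - z t * deriv u t with hF
    have hFL : F L = F 0 := by
      apply laneEmden_aux_const_of_hasDerivAt_zero hL.le
      · have : Continuous F := by
          apply Continuous.sub
          · exact (continuous_id.mul ((hz'c.mul hu'c).add (hzc.mul hup_cont))).add
              (continuous_const.mul ((hz'c.mul huc).sub (hzc.mul hu'c)))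
          · exact hzc.mul hu'c
        exact this.continuousOn
      · intro t ht
        have hutpos : 0 < u t := hupos t ⟨ht.1.le, ht.2⟩
        have hzt : HasDerivAt z (deriv z t) t := (hzd t).hasDerivAt
        have hut : HasDerivAt u (deriv u t) t := (hud t).hasDerivAt
        have hz't : HasDerivAt (deriv z) (deriv (deriv z) t) t := (hz'd t).hasDerivAt
        have hu't : HasDerivAt (deriv u) (deriv (deriv u) t) t := (hu'd t).hasDerivAt
        have hup : HasDerivAt (fun s => u s ^ p)
            (deriv u t * p * u t ^ (p - 1)) t :=
          hut.rpow_const (Or.inr hp.le)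
        have H1 : HasDerivAt (fun s => deriv z s * deriv u s + z s * u s ^ p)
            ((deriv (deriv z) t * deriv u t + deriv z t * deriv (deriv u) t) +
              (deriv z t * u t ^ p + z t * (deriv u t * p * u t ^ (p - 1)))) t :=
          (hz't.mul hu't).add (hzt.mul hup)
        have H2 : HasDerivAt (fun s => deriv z s * u s - z s * deriv u s)
            ((deriv (deriv z) t * u t + deriv z t * deriv u t) -
              (deriv z t * deriv u t + z t * deriv (deriv u) t)) t :=
          (hz't.mul hut).sub (hzt.mul hu't)
        have H3 : HasDerivAt (fun s => z s * deriv u s)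
            (deriv z t * deriv u t + z t * deriv (deriv u) t) t := hzt.mul hu't
        have H := (((hasDerivAt_id t).fun_mul H1).fun_add (H2.const_mul c)).fun_sub H3
        refine HasDerivAt.congr_deriv H (Eq.symm ?_)
        have hzz : deriv (deriv z) t = -(p * u t ^ (p - 1) * z t) := by
          have := hzeq t ht; linarith
        have huu : deriv (deriv u) t = -(u t ^ p) := hueq t ht
        have hsplit : u t ^ (p - 1) = u t ^ p / u t := by
          rw [Real.rpow_sub hutpos, Real.rpow_one]
        rw [hzz, huu, hc, hsplit]
        field_simp
        ring
    have hF0 : F 0 = 0 := by simp [hF, hz0, hu'0]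
    have hFLval : F L = L * (deriv z L * deriv u L) := by
      simp [hF, hzL, huL]
    rw [hF0, hFLval] at hFL
    rcases mul_eq_zero.1 hFL with h | h
    · exact absurd h hL.ne'
    · rcases mul_eq_zero.1 h with h' | h'
      · exact h'
      · exact absurd h' hu'L
  -- Uniqueness for the linear ODE, propagating backwards from t = L.
  -- Set up the first order system  y' = v t y,  v t (a, b) = (b, -(Q t) a).
  set Q : ℝ → ℝ := fun t => p * u (max 0 (min t L)) ^ (p - 1) with hQ
  have hclamp : ∀ t : ℝ, max 0 (min t L) ∈ Icc (0:ℝ) L := by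
    intro t
    exact ⟨le_max_left _ _, max_le hL.le (min_le_right _ _)⟩
  obtain ⟨M, hM⟩ := (isCompact_Icc (a := (0:ℝ)) (b := L)).exists_bound_of_continuousOn
    ((continuous_const.mul hup1_cont).continuousOn)
  have hQb : ∀ t, |Q t| ≤ M := fun t => hM _ (hclamp t)
  set K : NNReal := ⟨max 1 M, le_trans zero_le_one (le_max_left 1 M)⟩ with hK
  set v : ℝ → ℝ × ℝ → ℝ × ℝ := fun t x => (x.2, -(Q t * x.1)) with hv_def
  have hv : ∀ t, LipschitzWith K (v t) := by
    intro t
    apply LipschitzWith.of_dist_le_mul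
    intro x y
    have hxy : dist (v t x) (v t y) = max (dist x.2 y.2) (|Q t| * dist x.1 y.1) := by
      rw [Prod.dist_eq]
      congr 1
      simp only [hv_def, Real.dist_eq]
      have h1 : -(Q t * x.1) - -(Q t * y.1) = Q t * (y.1 - x.1) := by ring
      rw [h1, abs_mul, abs_sub_comm y.1 x.1]
    rw [hxy, Prod.dist_eq]
    have hd1 : (0:ℝ) ≤ dist x.1 y.1 := dist_nonneg
    have hd2 : (0:ℝ) ≤ dist x.2 y.2 := dist_nonneg
    have hKval : (K : ℝ) = max 1 M := rfl
    rw [hKval]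
    apply max_le
    · calc dist x.2 y.2 ≤ max (dist x.1 y.1) (dist x.2 y.2) := le_max_right _ _
        _ ≤ max 1 M * max (dist x.1 y.1) (dist x.2 y.2) :=
            le_mul_of_one_le_left (le_max_of_le_right hd2) (le_max_left 1 M)
    · calc |Q t| * dist x.1 y.1 ≤ M * dist x.1 y.1 :=
            mul_le_mul_of_nonneg_right (hQb t) hd1
        _ ≤ max 1 M * max (dist x.1 y.1) (dist x.2 y.2) :=
            mul_le_mul (le_max_right 1 M) (le_max_left _ _) hd1
              (le_trans zero_le_one (le_max_left 1 M))
  set f : ℝ → ℝ × ℝ := fun t => (z t, deriv z t) with hf_def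
  have hf' : ∀ t ∈ Ioc (0:ℝ) L, HasDerivWithinAt f (v t (f t)) (Iic t) t := by
    intro t ht
    have hQt : Q t = p * u t ^ (p - 1) := by
      simp only [hQ, min_eq_left ht.2, max_eq_right ht.1.le]
    have H : HasDerivAt f (deriv z t, deriv (deriv z) t) t :=
      (hzd t).hasDerivAt.prodMk (hz'd t).hasDerivAt
    have hval : v t (f t) = (deriv z t, deriv (deriv z) t) := by
      simp only [hv_def, hf_def, hQt]
      rw [hzext t ⟨ht.1.le, ht.2⟩]
    rw [hval]
    exact H.hasDerivWithinAt
  have hgL : f L = (fun _ : ℝ => ((0:ℝ), (0:ℝ))) L := by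
    simp [hf_def, hzL, hz'L]
  have huniq := ODE_solution_unique_of_mem_Icc_left
    (s := fun _ => (univ : Set (ℝ × ℝ))) (fun t _ => (hv t).lipschitzOnWith)
    ((hzc.prodMk hz'c).continuousOn) hf' (fun _ _ => trivial)
    continuousOn_const
    (by
      intro t ht
      have : v t ((0:ℝ), (0:ℝ)) = ((0:ℝ), (0:ℝ)) := by simp [hv_def]
      rw [show ((fun _ : ℝ => ((0:ℝ),(0:ℝ))) t) = ((0:ℝ),(0:ℝ)) from rfl, this]
      exact (hasDerivWithinAt_const (x := t) (s := Iic t) (c := ((0:ℝ),(0:ℝ)))).congr_deriv rfl)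
    (fun _ _ => trivial) hgL
  intro t ht
  have := huniq ht
  simpa [hf_def] using congrArg Prod.fst this
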